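/- arXiv:2305.05905 — 5 statements merged into one kernel-verified Lean document; each statement's English description precedes it below -/
import Mathlib

section
/- Let K be a field of characteristic 2, and let s₁,s₂,s₃,s₄ be the elementary symmetric polynomials in x₁,x₂,x₃,x₄ and Δ₄ the A₄-orbit sum of x₁³x₂²x₃. Then Δ₄² + (s₁²s₄ + s₁s₂s₃ + s₃²)Δ₄ = s₁⁴s₄² + s₁³s₃³ + s₁²s₂³s₄ + s₂³s₃² + s₃⁴ in K[x₁,x₂,x₃,x₄]. -/
open MvPolynomial

/-- The `A₄`-orbit sum of the monomial `x₁³x₂²x₃`. -/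
noncomputable def Delta4 (K : Type*) [CommRing K] : MvPolynomial (Fin 4) K :=
  letI : DecidableEq (MvPolynomial (Fin 4) K) := Classical.decEq _
  (Finset.univ.image (fun σ : alternatingGroup (Fin 4) =>
    rename (σ : Equiv.Perm (Fin 4)) (X 0 ^ 3 * X 1 ^ 2 * X 2))).sum id

section Aux

open Equiv

variable (K : Type*) [Field K]

/-- The exponent vector of the monomial `x₁³x₂²x₃`. -/
noncomputable def d4 : Fin 4 →₀ ℕ :=
  Finsupp.single 0 3 + Finsupp.single 1 2 + Finsupp.single 2 1

lemma mono_eq4 : (X 0 ^ 3 * X 1 ^ 2 * X 2 : MvPolynomial (Fin 4) K) = monomial d4 1 := by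
  rw [d4]
  simp [X, monomial_pow, monomial_mul, Finsupp.smul_single]

lemma d4_inj : Function.Injective (d4 : Fin 4 → ℕ) := by
  intro a b hab
  fin_cases a <;> fin_cases b <;> simp_all [d4, Finsupp.single_apply]

lemma f_inj4 : Function.Injective (fun σ : alternatingGroup (Fin 4) =>
    rename (σ : Equiv.Perm (Fin 4)) (X 0 ^ 3 * X 1 ^ 2 * X 2 : MvPolynomial (Fin 4) K)) := by
  intro σ τ h
  simp only [mono_eq4, rename_monomial] at h
  rw [monomial_eq_monomial_iff] at h
  rcases h with ⟨h, -⟩ | ⟨h, -⟩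
  · have key : ∀ i, (σ : Perm (Fin 4)) i = (τ : Perm (Fin 4)) i := by
      intro i
      have h1 : Finsupp.mapDomain (σ : Perm (Fin 4)) d4 ((σ : Perm (Fin 4)) i) = d4 i :=
        Finsupp.mapDomain_apply (Equiv.injective _) _ _
      have h2 : Finsupp.mapDomain (τ : Perm (Fin 4)) d4
          ((τ : Perm (Fin 4)) ((τ : Perm (Fin 4)).symm ((σ : Perm (Fin 4)) i)))
          = d4 ((τ : Perm (Fin 4)).symm ((σ : Perm (Fin 4)) i)) :=
        Finsupp.mapDomain_apply (Equiv.injective _) _ _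
      rw [Equiv.apply_symm_apply, ← h, h1] at h2
      have h3 := d4_inj h2.symm
      have h4 := congrArg (τ : Perm (Fin 4)) h3
      rwa [Equiv.apply_symm_apply] at h4
    exact Subtype.ext (Equiv.ext key)
  · exact absurd h one_ne_zero

lemma delta4_expand : Delta4 K = ∑ σ : alternatingGroup (Fin 4),
    rename (σ : Equiv.Perm (Fin 4)) (X 0 ^ 3 * X 1 ^ 2 * X 2 : MvPolynomial (Fin 4) K) := by
  letI : DecidableEq (MvPolynomial (Fin 4) K) := Classical.decEq _
  rw [Delta4]
  exact Finset.sum_image (fun a _ b _ h => f_inj4 K h)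

lemma delta4_eq : Delta4 K = X 0 ^ 3 * X 1 ^ 2 * X 2 + X 0 ^ 3 * X 2 ^ 2 * X 3 + X 0 ^ 3 * X 1 * X 3 ^ 2 + X 0 ^ 2 * X 1 ^ 3 * X 3 + X 0 * X 1 ^ 3 * X 2 ^ 2 + X 1 ^ 3 * X 2 * X 3 ^ 2 + X 0 ^ 2 * X 1 * X 2 ^ 3 + X 1 ^ 2 * X 2 ^ 3 * X 3 + X 0 * X 2 ^ 3 * X 3 ^ 2 + X 0 ^ 2 * X 2 * X 3 ^ 3 + X 0 * X 1 ^ 2 * X 3 ^ 3 + X 1 * X 2 ^ 2 * X 3 ^ 3 := by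
  rw [delta4_expand,
    ← Finset.sum_subtype ({1, swap (1:Fin 4) 2 * swap (2:Fin 4) 3, swap (1:Fin 4) 3 * swap (3:Fin 4) 2, swap (0:Fin 4) 1 * swap (2:Fin 4) 3, swap (0:Fin 4) 1 * swap (1:Fin 4) 2, swap (0:Fin 4) 1 * swap (1:Fin 4) 3, swap (0:Fin 4) 2 * swap (2:Fin 4) 1, swap (0:Fin 4) 2 * swap (2:Fin 4) 3, swap (0:Fin 4) 2 * swap (1:Fin 4) 3, swap (0:Fin 4) 3 * swap (3:Fin 4) 1, swap (0:Fin 4) 3 * swap (3:Fin 4) 2, swap (0:Fin 4) 3 * swap (1:Fin 4) 2} : Finset (Equiv.Perm (Fin 4)))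
      (by intro x; simp only [Equiv.Perm.mem_alternatingGroup]; revert x; decide)
      (fun τ => rename τ (X 0 ^ 3 * X 1 ^ 2 * X 2 : MvPolynomial (Fin 4) K))]
  rw [show ({1, swap (1:Fin 4) 2 * swap (2:Fin 4) 3, swap (1:Fin 4) 3 * swap (3:Fin 4) 2, swap (0:Fin 4) 1 * swap (2:Fin 4) 3, swap (0:Fin 4) 1 * swap (1:Fin 4) 2, swap (0:Fin 4) 1 * swap (1:Fin 4) 3, swap (0:Fin 4) 2 * swap (2:Fin 4) 1, swap (0:Fin 4) 2 * swap (2:Fin 4) 3, swap (0:Fin 4) 2 * swap (1:Fin 4) 3, swap (0:Fin 4) 3 * swap (3:Fin 4) 1, swap (0:Fin 4) 3 * swap (3:Fin 4) 2, swap (0:Fin 4) 3 * swap (1:Fin 4) 2} : Finset (Equiv.Perm (Fin 4))).sum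
      (fun τ => rename τ (X 0 ^ 3 * X 1 ^ 2 * X 2 : MvPolynomial (Fin 4) K)) = _ from rfl]
  repeat rw [Finset.sum_insert (by decide)]
  rw [Finset.sum_singleton]
  simp only [map_mul, map_pow, rename_X]
  simp +decide [Equiv.Perm.mul_apply, Equiv.swap_apply_def]
  ring

lemma esymm1_eq : esymm (Fin 4) K 1 = X 0 + X 1 + X 2 + X 3 := by
  rw [esymm, show Finset.powersetCard 1 (Finset.univ : Finset (Fin 4)) =
    {{0}, {1}, {2}, {3}} from by decide]
  simp +decide [Finset.sum_insert, Finset.prod_insert, Finset.prod_singleton]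
  ring

lemma esymm2_eq : esymm (Fin 4) K 2 = X 0 * X 1 + X 0 * X 2 + X 0 * X 3 + X 1 * X 2 + X 1 * X 3 + X 2 * X 3 := by
  rw [esymm, show Finset.powersetCard 2 (Finset.univ : Finset (Fin 4)) =
    {{0,1}, {0,2}, {0,3}, {1,2}, {1,3}, {2,3}} from by decide]
  simp +decide [Finset.sum_insert, Finset.prod_insert, Finset.prod_singleton]
  ring

lemma esymm3_eq : esymm (Fin 4) K 3 = X 0 * X 1 * X 2 + X 0 * X 1 * X 3 + X 0 * X 2 * X 3 + X 1 * X 2 * X 3 := by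
  rw [esymm, show Finset.powersetCard 3 (Finset.univ : Finset (Fin 4)) =
    {{0,1,2}, {0,1,3}, {0,2,3}, {1,2,3}} from by decide]
  simp +decide [Finset.sum_insert, Finset.prod_insert, Finset.prod_singleton]
  ring

lemma esymm4_eq : esymm (Fin 4) K 4 = X 0 * X 1 * X 2 * X 3 := by
  rw [esymm, show Finset.powersetCard 4 (Finset.univ : Finset (Fin 4)) =
    {{0,1,2,3}} from by decide]
  simp +decide [Finset.sum_insert, Finset.prod_insert, Finset.prod_singleton]
  ring

end Aux

set_option maxHeartbeats 4000000 in
/-- In characteristic 2,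
`Δ₄² + (s₁²s₄ + s₁s₂s₃ + s₃²)Δ₄ = s₁⁴s₄² + s₁³s₃³ + s₁²s₂³s₄ + s₂³s₃² + s₃⁴`,
where `sᵢ` are the elementary symmetric polynomials in `x₁,…,x₄`. -/
theorem delta4_quadratic_relation (K : Type*) [Field K] [CharP K 2] :
    letI s : ℕ → MvPolynomial (Fin 4) K := fun i => esymm (Fin 4) K i
    Delta4 K ^ 2 + (s 1 ^ 2 * s 4 + s 1 * s 2 * s 3 + s 3 ^ 2) * Delta4 K
      = s 1 ^ 4 * s 4 ^ 2 + s 1 ^ 3 * s 3 ^ 3 + s 1 ^ 2 * s 2 ^ 3 * s 4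
        + s 2 ^ 3 * s 3 ^ 2 + s 3 ^ 4 := by
  have hK : (2 : K) = 0 := by exact_mod_cast CharP.cast_eq_zero K 2
  have h2 : (2 : MvPolynomial (Fin 4) K) = 0 := by
    rw [← map_ofNat (C : K →+* MvPolynomial (Fin 4) K) 2, hK, map_zero]
  show Delta4 K ^ 2 + (esymm (Fin 4) K 1 ^ 2 * esymm (Fin 4) K 4
      + esymm (Fin 4) K 1 * esymm (Fin 4) K 2 * esymm (Fin 4) K 3
      + esymm (Fin 4) K 3 ^ 2) * Delta4 K
    = esymm (Fin 4) K 1 ^ 4 * esymm (Fin 4) K 4 ^ 2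
      + esymm (Fin 4) K 1 ^ 3 * esymm (Fin 4) K 3 ^ 3
      + esymm (Fin 4) K 1 ^ 2 * esymm (Fin 4) K 2 ^ 3 * esymm (Fin 4) K 4
      + esymm (Fin 4) K 2 ^ 3 * esymm (Fin 4) K 3 ^ 2 + esymm (Fin 4) K 3 ^ 4
  rw [delta4_eq, esymm1_eq, esymm2_eq, esymm3_eq, esymm4_eq]
  linear_combination
    (X 1 ^ 2 * X 2 ^ 4 * X 3 ^ 6 +
      (-1) * X 1 ^ 3 * X 2 ^ 4 * X 3 ^ 5 +
      (-1) * X 1 ^ 3 * X 2 ^ 5 * X 3 ^ 4 +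
      (-1) * X 1 ^ 4 * X 2 ^ 3 * X 3 ^ 5 +
      (-5) * X 1 ^ 4 * X 2 ^ 4 * X 3 ^ 4 +
      (-1) * X 1 ^ 4 * X 2 ^ 5 * X 3 ^ 3 +
      X 1 ^ 4 * X 2 ^ 6 * X 3 ^ 2 +
      (-1) * X 1 ^ 5 * X 2 ^ 3 * X 3 ^ 4 +
      (-1) * X 1 ^ 5 * X 2 ^ 4 * X 3 ^ 3 +
      X 1 ^ 6 * X 2 ^ 2 * X 3 ^ 4 +
      (-1) * X 0 * X 1 ^ 2 * X 2 ^ 3 * X 3 ^ 6 +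
      (-9) * X 0 * X 1 ^ 2 * X 2 ^ 4 * X 3 ^ 5 +
      (-11) * X 0 * X 1 ^ 2 * X 2 ^ 5 * X 3 ^ 4 +
      (-1) * X 0 * X 1 ^ 2 * X 2 ^ 6 * X 3 ^ 3 +
      (-1) * X 0 * X 1 ^ 3 * X 2 ^ 2 * X 3 ^ 6 +
      (-23) * X 0 * X 1 ^ 3 * X 2 ^ 3 * X 3 ^ 5 +
      (-48) * X 0 * X 1 ^ 3 * X 2 ^ 4 * X 3 ^ 4 +
      (-23) * X 0 * X 1 ^ 3 * X 2 ^ 5 * X 3 ^ 3 +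
      (-1) * X 0 * X 1 ^ 3 * X 2 ^ 6 * X 3 ^ 2 +
      (-11) * X 0 * X 1 ^ 4 * X 2 ^ 2 * X 3 ^ 5 +
      (-48) * X 0 * X 1 ^ 4 * X 2 ^ 3 * X 3 ^ 4 +
      (-48) * X 0 * X 1 ^ 4 * X 2 ^ 4 * X 3 ^ 3 +
      (-9) * X 0 * X 1 ^ 4 * X 2 ^ 5 * X 3 ^ 2 +
      (-9) * X 0 * X 1 ^ 5 * X 2 ^ 2 * X 3 ^ 4 +
      (-23) * X 0 * X 1 ^ 5 * X 2 ^ 3 * X 3 ^ 3 +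
      (-11) * X 0 * X 1 ^ 5 * X 2 ^ 4 * X 3 ^ 2 +
      (-1) * X 0 * X 1 ^ 6 * X 2 ^ 2 * X 3 ^ 3 +
      (-1) * X 0 * X 1 ^ 6 * X 2 ^ 3 * X 3 ^ 2 +
      X 0 ^ 2 * X 2 ^ 6 * X 3 ^ 4 +
      (-1) * X 0 ^ 2 * X 1 * X 2 ^ 3 * X 3 ^ 6 +
      (-11) * X 0 ^ 2 * X 1 * X 2 ^ 4 * X 3 ^ 5 +
      (-9) * X 0 ^ 2 * X 1 * X 2 ^ 5 * X 3 ^ 4 +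
      (-1) * X 0 ^ 2 * X 1 * X 2 ^ 6 * X 3 ^ 3 +
      (-5) * X 0 ^ 2 * X 1 ^ 2 * X 2 ^ 2 * X 3 ^ 6 +
      (-48) * X 0 ^ 2 * X 1 ^ 2 * X 2 ^ 3 * X 3 ^ 5 +
      (-96) * X 0 ^ 2 * X 1 ^ 2 * X 2 ^ 4 * X 3 ^ 4 +
      (-48) * X 0 ^ 2 * X 1 ^ 2 * X 2 ^ 5 * X 3 ^ 3 +
      (-5) * X 0 ^ 2 * X 1 ^ 2 * X 2 ^ 6 * X 3 ^ 2 +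
      (-1) * X 0 ^ 2 * X 1 ^ 3 * X 2 * X 3 ^ 6 +
      (-48) * X 0 ^ 2 * X 1 ^ 3 * X 2 ^ 2 * X 3 ^ 5 +
      (-188) * X 0 ^ 2 * X 1 ^ 3 * X 2 ^ 3 * X 3 ^ 4 +
      (-188) * X 0 ^ 2 * X 1 ^ 3 * X 2 ^ 4 * X 3 ^ 3 +
      (-48) * X 0 ^ 2 * X 1 ^ 3 * X 2 ^ 5 * X 3 ^ 2 +
      (-1) * X 0 ^ 2 * X 1 ^ 3 * X 2 ^ 6 * X 3 +
      X 0 ^ 2 * X 1 ^ 4 * X 3 ^ 6 +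
      (-9) * X 0 ^ 2 * X 1 ^ 4 * X 2 * X 3 ^ 5 +
      (-96) * X 0 ^ 2 * X 1 ^ 4 * X 2 ^ 2 * X 3 ^ 4 +
      (-188) * X 0 ^ 2 * X 1 ^ 4 * X 2 ^ 3 * X 3 ^ 3 +
      (-96) * X 0 ^ 2 * X 1 ^ 4 * X 2 ^ 4 * X 3 ^ 2 +
      (-11) * X 0 ^ 2 * X 1 ^ 4 * X 2 ^ 5 * X 3 +
      (-11) * X 0 ^ 2 * X 1 ^ 5 * X 2 * X 3 ^ 4 +
      (-48) * X 0 ^ 2 * X 1 ^ 5 * X 2 ^ 2 * X 3 ^ 3 +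
      (-48) * X 0 ^ 2 * X 1 ^ 5 * X 2 ^ 3 * X 3 ^ 2 +
      (-9) * X 0 ^ 2 * X 1 ^ 5 * X 2 ^ 4 * X 3 +
      (-1) * X 0 ^ 2 * X 1 ^ 6 * X 2 * X 3 ^ 3 +
      (-5) * X 0 ^ 2 * X 1 ^ 6 * X 2 ^ 2 * X 3 ^ 2 +
      (-1) * X 0 ^ 2 * X 1 ^ 6 * X 2 ^ 3 * X 3 +
      X 0 ^ 2 * X 1 ^ 6 * X 2 ^ 4 +
      (-1) * X 0 ^ 3 * X 2 ^ 4 * X 3 ^ 5 +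
      (-1) * X 0 ^ 3 * X 2 ^ 5 * X 3 ^ 4 +
      (-1) * X 0 ^ 3 * X 1 * X 2 ^ 2 * X 3 ^ 6 +
      (-23) * X 0 ^ 3 * X 1 * X 2 ^ 3 * X 3 ^ 5 +
      (-48) * X 0 ^ 3 * X 1 * X 2 ^ 4 * X 3 ^ 4 +
      (-23) * X 0 ^ 3 * X 1 * X 2 ^ 5 * X 3 ^ 3 +
      (-1) * X 0 ^ 3 * X 1 * X 2 ^ 6 * X 3 ^ 2 +
      (-1) * X 0 ^ 3 * X 1 ^ 2 * X 2 * X 3 ^ 6 +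
      (-48) * X 0 ^ 3 * X 1 ^ 2 * X 2 ^ 2 * X 3 ^ 5 +
      (-188) * X 0 ^ 3 * X 1 ^ 2 * X 2 ^ 3 * X 3 ^ 4 +
      (-188) * X 0 ^ 3 * X 1 ^ 2 * X 2 ^ 4 * X 3 ^ 3 +
      (-48) * X 0 ^ 3 * X 1 ^ 2 * X 2 ^ 5 * X 3 ^ 2 +
      (-1) * X 0 ^ 3 * X 1 ^ 2 * X 2 ^ 6 * X 3 +
      (-23) * X 0 ^ 3 * X 1 ^ 3 * X 2 * X 3 ^ 5 +
      (-188) * X 0 ^ 3 * X 1 ^ 3 * X 2 ^ 2 * X 3 ^ 4 +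
      (-344) * X 0 ^ 3 * X 1 ^ 3 * X 2 ^ 3 * X 3 ^ 3 +
      (-188) * X 0 ^ 3 * X 1 ^ 3 * X 2 ^ 4 * X 3 ^ 2 +
      (-23) * X 0 ^ 3 * X 1 ^ 3 * X 2 ^ 5 * X 3 +
      (-1) * X 0 ^ 3 * X 1 ^ 4 * X 3 ^ 5 +
      (-48) * X 0 ^ 3 * X 1 ^ 4 * X 2 * X 3 ^ 4 +
      (-188) * X 0 ^ 3 * X 1 ^ 4 * X 2 ^ 2 * X 3 ^ 3 +
      (-188) * X 0 ^ 3 * X 1 ^ 4 * X 2 ^ 3 * X 3 ^ 2 +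
      (-48) * X 0 ^ 3 * X 1 ^ 4 * X 2 ^ 4 * X 3 +
      (-1) * X 0 ^ 3 * X 1 ^ 4 * X 2 ^ 5 +
      (-1) * X 0 ^ 3 * X 1 ^ 5 * X 3 ^ 4 +
      (-23) * X 0 ^ 3 * X 1 ^ 5 * X 2 * X 3 ^ 3 +
      (-48) * X 0 ^ 3 * X 1 ^ 5 * X 2 ^ 2 * X 3 ^ 2 +
      (-23) * X 0 ^ 3 * X 1 ^ 5 * X 2 ^ 3 * X 3 +
      (-1) * X 0 ^ 3 * X 1 ^ 5 * X 2 ^ 4 +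
      (-1) * X 0 ^ 3 * X 1 ^ 6 * X 2 * X 3 ^ 2 +
      (-1) * X 0 ^ 3 * X 1 ^ 6 * X 2 ^ 2 * X 3 +
      X 0 ^ 4 * X 2 ^ 2 * X 3 ^ 6 +
      (-1) * X 0 ^ 4 * X 2 ^ 3 * X 3 ^ 5 +
      (-5) * X 0 ^ 4 * X 2 ^ 4 * X 3 ^ 4 +
      (-1) * X 0 ^ 4 * X 2 ^ 5 * X 3 ^ 3 +
      (-9) * X 0 ^ 4 * X 1 * X 2 ^ 2 * X 3 ^ 5 +
      (-48) * X 0 ^ 4 * X 1 * X 2 ^ 3 * X 3 ^ 4 +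
      (-48) * X 0 ^ 4 * X 1 * X 2 ^ 4 * X 3 ^ 3 +
      (-11) * X 0 ^ 4 * X 1 * X 2 ^ 5 * X 3 ^ 2 +
      (-11) * X 0 ^ 4 * X 1 ^ 2 * X 2 * X 3 ^ 5 +
      (-96) * X 0 ^ 4 * X 1 ^ 2 * X 2 ^ 2 * X 3 ^ 4 +
      (-188) * X 0 ^ 4 * X 1 ^ 2 * X 2 ^ 3 * X 3 ^ 3 +
      (-96) * X 0 ^ 4 * X 1 ^ 2 * X 2 ^ 4 * X 3 ^ 2 +
      (-9) * X 0 ^ 4 * X 1 ^ 2 * X 2 ^ 5 * X 3 +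
      X 0 ^ 4 * X 1 ^ 2 * X 2 ^ 6 +
      (-1) * X 0 ^ 4 * X 1 ^ 3 * X 3 ^ 5 +
      (-48) * X 0 ^ 4 * X 1 ^ 3 * X 2 * X 3 ^ 4 +
      (-188) * X 0 ^ 4 * X 1 ^ 3 * X 2 ^ 2 * X 3 ^ 3 +
      (-188) * X 0 ^ 4 * X 1 ^ 3 * X 2 ^ 3 * X 3 ^ 2 +
      (-48) * X 0 ^ 4 * X 1 ^ 3 * X 2 ^ 4 * X 3 +
      (-1) * X 0 ^ 4 * X 1 ^ 3 * X 2 ^ 5 +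
      (-5) * X 0 ^ 4 * X 1 ^ 4 * X 3 ^ 4 +
      (-48) * X 0 ^ 4 * X 1 ^ 4 * X 2 * X 3 ^ 3 +
      (-96) * X 0 ^ 4 * X 1 ^ 4 * X 2 ^ 2 * X 3 ^ 2 +
      (-48) * X 0 ^ 4 * X 1 ^ 4 * X 2 ^ 3 * X 3 +
      (-5) * X 0 ^ 4 * X 1 ^ 4 * X 2 ^ 4 +
      (-1) * X 0 ^ 4 * X 1 ^ 5 * X 3 ^ 3 +
      (-9) * X 0 ^ 4 * X 1 ^ 5 * X 2 * X 3 ^ 2 +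
      (-11) * X 0 ^ 4 * X 1 ^ 5 * X 2 ^ 2 * X 3 +
      (-1) * X 0 ^ 4 * X 1 ^ 5 * X 2 ^ 3 +
      X 0 ^ 4 * X 1 ^ 6 * X 3 ^ 2 +
      (-1) * X 0 ^ 5 * X 2 ^ 3 * X 3 ^ 4 +
      (-1) * X 0 ^ 5 * X 2 ^ 4 * X 3 ^ 3 +
      (-11) * X 0 ^ 5 * X 1 * X 2 ^ 2 * X 3 ^ 4 +
      (-23) * X 0 ^ 5 * X 1 * X 2 ^ 3 * X 3 ^ 3 +
      (-9) * X 0 ^ 5 * X 1 * X 2 ^ 4 * X 3 ^ 2 +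
      (-9) * X 0 ^ 5 * X 1 ^ 2 * X 2 * X 3 ^ 4 +
      (-48) * X 0 ^ 5 * X 1 ^ 2 * X 2 ^ 2 * X 3 ^ 3 +
      (-48) * X 0 ^ 5 * X 1 ^ 2 * X 2 ^ 3 * X 3 ^ 2 +
      (-11) * X 0 ^ 5 * X 1 ^ 2 * X 2 ^ 4 * X 3 +
      (-1) * X 0 ^ 5 * X 1 ^ 3 * X 3 ^ 4 +
      (-23) * X 0 ^ 5 * X 1 ^ 3 * X 2 * X 3 ^ 3 +
      (-48) * X 0 ^ 5 * X 1 ^ 3 * X 2 ^ 2 * X 3 ^ 2 +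
      (-23) * X 0 ^ 5 * X 1 ^ 3 * X 2 ^ 3 * X 3 +
      (-1) * X 0 ^ 5 * X 1 ^ 3 * X 2 ^ 4 +
      (-1) * X 0 ^ 5 * X 1 ^ 4 * X 3 ^ 3 +
      (-11) * X 0 ^ 5 * X 1 ^ 4 * X 2 * X 3 ^ 2 +
      (-9) * X 0 ^ 5 * X 1 ^ 4 * X 2 ^ 2 * X 3 +
      (-1) * X 0 ^ 5 * X 1 ^ 4 * X 2 ^ 3 +
      X 0 ^ 6 * X 2 ^ 4 * X 3 ^ 2 +
      (-1) * X 0 ^ 6 * X 1 * X 2 ^ 2 * X 3 ^ 3 +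
      (-1) * X 0 ^ 6 * X 1 * X 2 ^ 3 * X 3 ^ 2 +
      X 0 ^ 6 * X 1 ^ 2 * X 3 ^ 4 +
      (-1) * X 0 ^ 6 * X 1 ^ 2 * X 2 * X 3 ^ 3 +
      (-5) * X 0 ^ 6 * X 1 ^ 2 * X 2 ^ 2 * X 3 ^ 2 +
      (-1) * X 0 ^ 6 * X 1 ^ 2 * X 2 ^ 3 * X 3 +
      (-1) * X 0 ^ 6 * X 1 ^ 3 * X 2 * X 3 ^ 2 +
      (-1) * X 0 ^ 6 * X 1 ^ 3 * X 2 ^ 2 * X 3 +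
      X 0 ^ 6 * X 1 ^ 4 * X 2 ^ 2) * h2
end

section
/- Let K be an algebraically closed field of characteristic 2 and let f = E² + (A²D + ABC + C²)E + A⁴D² + A³C³ + A²B³D + B³C² + C⁴ in K[A,B,C,D,E]. Then f is irreducible. -/
open MvPolynomial

/-- The defining polynomial
`f = E² + (A²D+ABC+C²)E + A⁴D² + A³C³ + A²B³D + B³C² + C⁴`
of the quotient singularity `𝔸⁴/A₄` in characteristic 2, with variables
`A = X 0, B = X 1, C = X 2, D = X 3, E = X 4`. -/
noncomputable def quotientPoly (K : Type*) [CommRing K] : MvPolynomial (Fin 5) K :=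
  X 4 ^ 2 + (X 0 ^ 2 * X 3 + X 0 * X 1 * X 2 + X 2 ^ 2) * X 4
    + X 0 ^ 4 * X 3 ^ 2 + X 0 ^ 3 * X 2 ^ 3 + X 0 ^ 2 * X 1 ^ 3 * X 3
    + X 1 ^ 3 * X 2 ^ 2 + X 2 ^ 4

/-- Over an algebraically closed field of characteristic 2, `f` is irreducible. -/
theorem quotientPoly_irreducible (K : Type*) [Field K] [IsAlgClosed K] [CharP K 2] :
    Irreducible (quotientPoly K) := by
  set e : MvPolynomial (Fin 5) K ≃ₐ[K] Polynomial (MvPolynomial (Fin 4) K) :=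
    (renameEquiv K (finRotate 5)).trans (MvPolynomial.finSuccEquiv K 4) with he
  set p : MvPolynomial (Fin 4) K := X 0 ^ 2 * X 3 + X 0 * X 1 * X 2 + X 2 ^ 2 with hp
  set q : MvPolynomial (Fin 4) K := X 0 ^ 4 * X 3 ^ 2 + X 0 ^ 3 * X 2 ^ 3 + X 0 ^ 2 * X 1 ^ 3 * X 3
      + X 1 ^ 3 * X 2 ^ 2 + X 2 ^ 4 with hq
  have h0 : e (X 0) = Polynomial.C (X 0) := by
    simp only [he, AlgEquiv.trans_apply, renameEquiv_apply, rename_X, finRotate_succ_apply]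
    rw [show ((0 : Fin 5) + 1) = Fin.succ (0 : Fin 4) from by decide, finSuccEquiv_X_succ]
  have h1 : e (X 1) = Polynomial.C (X 1) := by
    simp only [he, AlgEquiv.trans_apply, renameEquiv_apply, rename_X, finRotate_succ_apply]
    rw [show ((1 : Fin 5) + 1) = Fin.succ (1 : Fin 4) from by decide, finSuccEquiv_X_succ]
  have h2 : e (X 2) = Polynomial.C (X 2) := by
    simp only [he, AlgEquiv.trans_apply, renameEquiv_apply, rename_X, finRotate_succ_apply]
    rw [show ((2 : Fin 5) + 1) = Fin.succ (2 : Fin 4) from by decide, finSuccEquiv_X_succ]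
  have h3 : e (X 3) = Polynomial.C (X 3) := by
    simp only [he, AlgEquiv.trans_apply, renameEquiv_apply, rename_X, finRotate_succ_apply]
    rw [show ((3 : Fin 5) + 1) = Fin.succ (3 : Fin 4) from by decide, finSuccEquiv_X_succ]
  have h4 : e (X 4) = Polynomial.X := by
    simp only [he, AlgEquiv.trans_apply, renameEquiv_apply, rename_X, finRotate_succ_apply]
    rw [show ((4 : Fin 5) + 1) = (0 : Fin 5) from by decide, finSuccEquiv_X_zero]
  have hef : e (quotientPoly K)
      = Polynomial.X ^ 2 + Polynomial.C p * Polynomial.X + Polynomial.C q := by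
    simp only [quotientPoly, map_add, map_mul, map_pow, h0, h1, h2, h3, h4, hp, hq,
      Polynomial.C_add, Polynomial.C_mul, Polynomial.C_pow]
    ring
  set P : Polynomial (MvPolynomial (Fin 4) K) := Polynomial.X ^ 2 + Polynomial.C p * Polynomial.X + Polynomial.C q
    with hP
  have hrem : (Polynomial.C p * Polynomial.X + Polynomial.C q).degree < 2 :=
    lt_of_le_of_lt Polynomial.degree_linear_le (by norm_num)
  have hmonic : P.Monic := by
    have := Polynomial.monic_X_pow_add (n := 2)
      (p := Polynomial.C p * Polynomial.X + Polynomial.C q) hrem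
    simpa [hP, add_assoc] using this
  have hdeg : P.natDegree = 2 := by
    have hd : P.degree = 2 := by
      rw [hP, add_assoc, Polynomial.degree_add_eq_left_of_degree_lt]
      · exact Polynomial.degree_X_pow 2
      · rw [Polynomial.degree_X_pow]; exact hrem
    exact Polynomial.natDegree_eq_of_degree_eq_some hd
  rw [← MulEquiv.irreducible_iff e, hef]
  by_contra hirr
  obtain ⟨s, t, hst, hsum⟩ := (hmonic.not_irreducible_iff_exists_add_mul_eq_coeff hdeg).mp hirr
  have hc0 : P.coeff 0 = q := by
    simp [hP, Polynomial.coeff_add, Polynomial.coeff_X_pow, Polynomial.coeff_C_mul]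
  have hc1 : P.coeff 1 = p := by
    simp [hP, Polynomial.coeff_add, Polynomial.coeff_X_pow, Polynomial.coeff_C_mul]
  rw [hc0] at hst
  rw [hc1] at hsum
  -- specialize A ↦ X, B ↦ 0, C ↦ 1, D ↦ 0
  set ψ : MvPolynomial (Fin 4) K →ₐ[K] Polynomial K := aeval ![Polynomial.X, 0, 1, 0] with hψ
  have e0 : ψ (X 0) = Polynomial.X := by simp [hψ]
  have e1 : ψ (X 1) = 0 := by simp [hψ]
  have e2 : ψ (X 2) = 1 := by simp [hψ]
  have e3 : ψ (X 3) = 0 := by simp [hψ]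
  have hψq : ψ q = Polynomial.X ^ 3 + 1 := by
    rw [hq]; simp only [map_add, map_mul, map_pow, e0, e1, e2, e3]; ring
  have hψp : ψ p = 1 := by
    rw [hp]; simp only [map_add, map_mul, map_pow, e0, e1, e2, e3]; ring
  set a : Polynomial K := ψ s with ha
  set b : Polynomial K := ψ t with hb
  have hab : a * b = Polynomial.X ^ 3 + 1 := by
    rw [ha, hb, ← map_mul, ← hst, hψq]
  have habs : a + b = 1 := by
    rw [ha, hb, ← map_add, ← hsum, hψp]
  have hX31 : (Polynomial.X ^ 3 + 1 : Polynomial K) ≠ 0 := by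
    intro h
    have := congrArg (fun r => Polynomial.coeff r 3) h
    simp [Polynomial.coeff_one] at this
  have hne : a * b ≠ 0 := hab ▸ hX31
  have hane : a ≠ 0 := left_ne_zero_of_mul hne
  have hbne : b ≠ 0 := right_ne_zero_of_mul hne
  have hdegab : a.natDegree + b.natDegree = 3 := by
    rw [← Polynomial.natDegree_mul hane hbne, hab]
    compute_degree!
  have hb' : b = 1 - a := eq_sub_of_add_eq' habs
  rcases Nat.eq_zero_or_pos a.natDegree with h | h
  · have : b.natDegree ≤ 0 := by
      rw [hb']
      exact le_trans (Polynomial.natDegree_sub_le _ _) (by simp [h])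
    omega
  · have : b.natDegree = a.natDegree := by
      rw [hb', Polynomial.natDegree_sub_eq_right_of_natDegree_lt (by simpa using h)]
    omega
end

section
/- Let K be an algebraically closed field of characteristic 2. The image of the parametrization t ↦ (A,B,C,D,E) = (t₁+t₂, t₁²+t₁t₂, t₁³+t₁²t₂, t₁³t₂, t₁⁶+t₁⁵t₂+t₁⁴t₂²+t₁³t₂³) for (t₁,t₂) ∈ K² equals the closed set V(B² + AC, ABC + A²D + C², E + A²D + C²) ⊆ 𝔸⁵_K. -/
/-- Over an algebraically closed field of characteristic 2, the image of the
parametrization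
`(t₁,t₂) ↦ (A,B,C,D,E) = (t₁+t₂, t₁²+t₁t₂, t₁³+t₁²t₂, t₁³t₂, t₁⁶+t₁⁵t₂+t₁⁴t₂²+t₁³t₂³)`
equals the closed set `V(B²+AC, ABC+A²D+C², E+A²D+C²) ⊆ 𝔸⁵`. -/
theorem P2_parametrization (K : Type*) [Field K] [IsAlgClosed K] [CharP K 2] :
    {p : K × K × K × K × K | ∃ t₁ t₂ : K,
        p = (t₁ + t₂, t₁ ^ 2 + t₁ * t₂, t₁ ^ 3 + t₁ ^ 2 * t₂, t₁ ^ 3 * t₂,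
          t₁ ^ 6 + t₁ ^ 5 * t₂ + t₁ ^ 4 * t₂ ^ 2 + t₁ ^ 3 * t₂ ^ 3)}
      = {p : K × K × K × K × K |
          p.2.1 ^ 2 + p.1 * p.2.2.1 = 0 ∧
          p.1 * p.2.1 * p.2.2.1 + p.1 ^ 2 * p.2.2.2.1 + p.2.2.1 ^ 2 = 0 ∧
          p.2.2.2.2 + p.1 ^ 2 * p.2.2.2.1 + p.2.2.1 ^ 2 = 0} := by
  have h2 : (2 : K) = 0 := by exact_mod_cast CharP.cast_eq_zero K 2
  ext p
  obtain ⟨A, B, C, D, E⟩ := p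
  simp only [Set.mem_setOf_eq, Prod.mk.injEq]
  constructor
  · rintro ⟨t₁, t₂, hA, hB, hC, hD, hE⟩
    subst hA hB hC hD hE
    refine ⟨?_, ?_, ?_⟩
    · linear_combination (t₁^4 + 2*t₁^3*t₂ + t₁^2*t₂^2) * h2
    · linear_combination (t₁^6 + 3*t₁^5*t₂ + 3*t₁^4*t₂^2 + t₁^3*t₂^3) * h2
    · linear_combination (t₁^6 + 2*t₁^5*t₂ + 2*t₁^4*t₂^2 + t₁^3*t₂^3) * h2
  · rintro ⟨h1, h2', h3⟩
    by_cases hA : A = 0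
    · subst hA
      have hB : B = 0 := by
        have hB2 : B ^ 2 = 0 := by linear_combination h1
        exact pow_eq_zero_iff (two_ne_zero) |>.mp hB2
      have hC : C = 0 := by
        have hC2 : C ^ 2 = 0 := by linear_combination h2'
        exact pow_eq_zero_iff (two_ne_zero) |>.mp hC2
      subst hB hC
      have hE : E = 0 := by linear_combination h3
      subst hE
      obtain ⟨t, ht⟩ := IsAlgClosed.exists_pow_nat_eq D (n := 4) (by norm_num)
      exact ⟨t, t, by linear_combination -t * h2, by linear_combination -t^2 * h2,
        by linear_combination -t^3 * h2, by linear_combination -ht,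
        by linear_combination -2*t^6 * h2⟩
    · have hu : A * A⁻¹ = 1 := mul_inv_cancel₀ hA
      refine ⟨B / A, A + B / A, ?_, ?_, ?_, ?_, ?_⟩
      · linear_combination ((-1)*B*A⁻¹) * h2
      · linear_combination ((-2)*A⁻¹^2) * h1 + ((-1)*B + (2)*C*A⁻¹) * hu + (C*A⁻¹) * h2
      · linear_combination ((-2)*B*A⁻¹^3 + (-1)*A⁻¹) * h1 +
          ((-1)*B^2*A⁻¹ + (2)*B*C*A⁻¹^2 + C) * hu + (C + B*C*A⁻¹^2) * h2
      · linear_combination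
          ((-1)*B^3*A⁻¹^2 + B^2*C*A⁻¹^3 + (2)*B*C*A⁻¹ + (-1)*C^2*A⁻¹^2 + A*D*A⁻¹ + D) * hu +
          ((-1)*B^2*A⁻¹^4 + (-1)*B*A⁻¹^2 + C*A⁻¹^3) * h1 + ((-1)*A⁻¹^2) * h2' +
          (D + B*C*A⁻¹) * h2
      · linear_combination ((1:K)) * h3 +
          ((-4)*B^4*A⁻¹^6 + (-6)*B^3*A⁻¹^4 + (4)*B^2*C*A⁻¹^5 + (-4)*B^2*A⁻¹^2 +
            (10)*B*C*A⁻¹^3 + (-1)*B + (14)*C*A⁻¹ + (4)*D*A⁻¹^2) * h1 +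
          ((-6)*B^5*A⁻¹^4 + (-4)*A*B^4*A⁻¹^3 + (-1)*A^2*B^3*A⁻¹^2 + (4)*B^4*C*A⁻¹^5 +
            (-4)*B^4*A⁻¹^2 + (-1)*A*B^3*A⁻¹ + (10)*B^3*C*A⁻¹^3 + (-1)*B^3 +
            (-4)*B^2*C^2*A⁻¹^4 + (14)*B^2*C*A⁻¹ + (-10)*B*C^2*A⁻¹^2 + (4)*A*B^2*D*A⁻¹^3 +
            (-14)*C^2 + (4)*B^2*D*A⁻¹^2 + (10)*A*B*D*A⁻¹ + (10)*B*D + (-4)*C*D*A⁻¹) * hu +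
          ((-15) + (-4)*B^2*A⁻¹^4 + (-10)*B*A⁻¹^2) * h2' +
          ((8)*A*B*C + (7)*A^2*D + (5)*B*D + (-2)*C*D*A⁻¹) * h2
end

section
/- Let K be an algebraically closed field of characteristic 2. The affine variety R₀ = V(1 + r₁² + r₁ + w r₂³ + v r₂ + v² r₂²) ⊆ 𝔸⁴_K (coordinates w, v, r₁, r₂) is smooth. -/
open MvPolynomial

/-- Over an algebraically closed field of characteristic 2, the hypersurface
`R₀ = V(1 + r₁² + r₁ + w·r₂³ + v·r₂ + v²·r₂²) ⊆ 𝔸⁴` (variables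
`w = X 0, v = X 1, r₁ = X 2, r₂ = X 3`) is smooth: at every point of the
hypersurface some partial derivative of the defining polynomial is nonzero. -/
theorem R0_smooth (K : Type*) [Field K] [IsAlgClosed K] [CharP K 2] :
    letI g : MvPolynomial (Fin 4) K :=
      1 + X 2 ^ 2 + X 2 + X 0 * X 3 ^ 3 + X 1 * X 3 + X 1 ^ 2 * X 3 ^ 2
    ∀ p : Fin 4 → K, eval p g = 0 → ∃ i : Fin 4, eval p (pderiv i g) ≠ 0 := by
  intro p _
  refine ⟨2, ?_⟩
  have h2 : (2 : K) = 0 := by exact_mod_cast CharP.cast_eq_zero K 2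
  simp [pderiv_X, Pi.single_apply]
  ring_nf
  simp [h2]
end

section
/- Let K be an algebraically closed field of characteristic 2 and let W₀ = V(w₁² + w₁w₂ + u v w₁ + w₂² + v³w₂ + u³) ⊆ 𝔸⁴_K with coordinates u, v, w₁, w₂. Then the singular locus of W₀ is exactly the curve {(u,v,w₁,w₂) : u = v², w₁ = v³, w₂ = v³}, which is a smooth irreducible curve isomorphic to 𝔸¹. -/
open MvPolynomial

/-- Over an algebraically closed field of characteristic 2, the singular locus
of `W₀ = V(w₁² + w₁w₂ + u·v·w₁ + w₂² + v³·w₂ + u³) ⊆ 𝔸⁴` (variables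
`u = X 0, v = X 1, w₁ = X 2, w₂ = X 3`) is exactly the curve
`{(v², v, v³, v³) : v ∈ K}`, and this curve is a smooth irreducible curve
isomorphic to `𝔸¹` (the parametrization `v ↦ (v², v, v³, v³)` is injective). -/
theorem W0_singular_locus (K : Type*) [Field K] [IsAlgClosed K] [CharP K 2] :
    letI g : MvPolynomial (Fin 4) K :=
      X 2 ^ 2 + X 2 * X 3 + X 0 * X 1 * X 2 + X 3 ^ 2 + X 1 ^ 3 * X 3 + X 0 ^ 3
    {p : Fin 4 → K | eval p g = 0 ∧ ∀ i : Fin 4, eval p (pderiv i g) = 0}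
        = {p : Fin 4 → K | ∃ v : K, p = ![v ^ 2, v, v ^ 3, v ^ 3]} ∧
      Function.Injective (fun v : K => (![v ^ 2, v, v ^ 3, v ^ 3] : Fin 4 → K)) := by
  have two : (2 : K) = 0 := by exact_mod_cast CharP.cast_eq_zero K 2
  constructor
  · ext p
    simp only [Set.mem_setOf_eq]
    constructor
    · rintro ⟨hg, hd⟩
      have h0 := hd 0
      have h1 := hd 1
      have h2 := hd 2
      have h3 := hd 3
      simp [pderiv_X] at h0 h1 h2 h3
      have e3 : p 2 = p 1 ^ 3 := by
        linear_combination h3 - (p 3 + p 1 ^ 3) * two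
      have e2 : p 3 = p 0 * p 1 := by
        linear_combination h2 - (p 2 + p 0 * p 1) * two
      rw [e3] at h0
      have sq : (p 0 + p 1 ^ 2) ^ 2 = 0 := by
        linear_combination h0 + (p 0 * p 1 ^ 2 - p 0 ^ 2) * two
      have e0 : p 0 + p 1 ^ 2 = 0 := by
        have := pow_eq_zero_iff (n := 2) (by norm_num) |>.mp sq
        exact this
      have e0' : p 0 = p 1 ^ 2 := by linear_combination e0 - p 1 ^ 2 * two
      refine ⟨p 1, ?_⟩
      funext i
      fin_cases i <;> simp [e0', e3, e2]
      ring
    · rintro ⟨v, rfl⟩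
      refine ⟨?_, ?_⟩
      · simp
        linear_combination (3 * v ^ 6) * two
      · intro i
        fin_cases i <;> simp [pderiv_X] <;>
          first
            | linear_combination (2 * v ^ 4) * two
            | linear_combination (2 * v ^ 5) * two
            | linear_combination (2 * v ^ 3) * two
  · intro a b h
    have := congrFun h 1
    simpa using this
end
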